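/- The formal power series B = Σ b_n X^n ∈ 𝔽₂[[X]], where (b_n) is the Baum–Sweet sequence, satisfies B^4 + X·B^2 + B = 0. -/

import Mathlib

open PowerSeries Finset

lemma bs_mk_sq (b : ℕ → ZMod 2) :
    (PowerSeries.mk b) ^ 2
      = PowerSeries.mk (fun n => if 2 ∣ n then b (n / 2) else 0) := by
  ext k
  rw [sq, PowerSeries.coeff_mul]
  simp only [PowerSeries.coeff_mk]
  rcases Nat.even_or_odd k with ⟨m, hm⟩ | ⟨m, hm⟩
  · subst hm
    rw [if_pos ⟨m, by ring⟩]
    have hmem : (m, m) ∈ Finset.HasAntidiagonal.antidiagonal (m + m) := by simp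
    rw [← Finset.add_sum_erase _ _ hmem]
    have hz : ∑ p ∈ (Finset.HasAntidiagonal.antidiagonal (m + m)).erase (m, m), b p.1 * b p.2 = 0 := by
      apply Finset.sum_involution (g := fun p _ => (p.2, p.1))
      · intro a _
        show b a.1 * b a.2 + b a.2 * b a.1 = 0
        rw [mul_comm (b a.2)]
        exact CharTwo.add_self_eq_zero _
      · intro a ha _
        simp only [Finset.mem_erase, Finset.HasAntidiagonal.mem_antidiagonal] at ha
        intro hcon
        apply ha.1
        have h1 : a.2 = a.1 := congrArg Prod.fst hcon
        have : a = (a.1, a.2) := rfl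
        rw [this, h1]
        have : a.1 = m := by omega
        rw [this]
      · intro a ha
        simp only [Finset.mem_erase, Finset.HasAntidiagonal.mem_antidiagonal] at ha ⊢
        constructor
        · intro hcon
          apply ha.1
          have h1 : a.1 = m := congrArg Prod.snd hcon
          have h2 : a.2 = m := congrArg Prod.fst hcon
          rw [show a = (a.1, a.2) from rfl, h1, h2]
        · omega
      · intro a _
        rfl
    rw [hz, add_zero]
    have : (m + m) / 2 = m := by omega
    rw [this]
    have := ZMod.pow_card (b m)
    rwa [pow_two] at this
  · subst hm
    rw [if_neg (by omega)]
    apply Finset.sum_involution (g := fun p _ => (p.2, p.1))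
    · intro a _
      show b a.1 * b a.2 + b a.2 * b a.1 = 0
      rw [mul_comm (b a.2)]
      exact CharTwo.add_self_eq_zero _
    · intro a ha _
      simp only [Finset.HasAntidiagonal.mem_antidiagonal] at ha
      intro hcon
      have h1 : a.2 = a.1 := congrArg Prod.fst hcon
      omega
    · intro a ha
      simp only [Finset.HasAntidiagonal.mem_antidiagonal] at ha ⊢
      omega
    · intro a _
      rfl

/-- The generating series `B = Σ b_n X^n ∈ 𝔽₂[[X]]` of the Baum–Sweet sequence
satisfies `B^4 + X·B^2 + B = 0`. -/
theorem baumSweet_series_algebraic_equation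
    (b : ℕ → ZMod 2) (h0 : b 0 = 1)
    (h1 : ∀ n, b (2 * n + 1) = b n)
    (h2 : ∀ n, b (4 * n) = b n)
    (h3 : ∀ n, b (4 * n + 2) = 0) :
    (PowerSeries.mk b) ^ 4 + PowerSeries.X * (PowerSeries.mk b) ^ 2 + PowerSeries.mk b = 0 := by
  set c : ℕ → ZMod 2 := fun n => if 2 ∣ n then b (n / 2) else 0 with hc
  have hsq : (PowerSeries.mk b) ^ 2 = PowerSeries.mk c := bs_mk_sq b
  have h4 : (PowerSeries.mk b) ^ 4 = PowerSeries.mk (fun n => if 2 ∣ n then c (n / 2) else 0) := by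
    rw [show (4 : ℕ) = 2 * 2 from rfl, pow_mul, hsq, bs_mk_sq]
  rw [h4, hsq]
  ext k
  simp only [map_add, PowerSeries.coeff_mk, PowerSeries.coeff_zero_eq_constantCoeff]
  rcases k with _ | k
  · simp [hc, h0]
    decide
  · rw [PowerSeries.coeff_succ_X_mul]
    simp only [PowerSeries.coeff_mk, map_zero]
    rcases Nat.even_or_odd k with ⟨m, hm⟩ | ⟨m, hm⟩
    · -- k+1 = 2m+1 odd
      have hk : k + 1 = 2 * m + 1 := by omega
      rw [hk, if_neg (by omega)]
      have hck : c k = b m := by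
        simp only [hc]
        rw [if_pos ⟨m, by omega⟩, show k / 2 = m by omega]
      rw [hck, h1]
      rw [zero_add]
      exact CharTwo.add_self_eq_zero _
    · -- k+1 = 2m+2 even
      have hk : k + 1 = 2 * (m + 1) := by omega
      have hck : c k = 0 := by
        simp only [hc]
        rw [if_neg (by omega)]
      rw [hck, if_pos ⟨m + 1, by omega⟩, show (k + 1) / 2 = m + 1 by omega]
      simp only [hc]
      rcases Nat.even_or_odd (m + 1) with ⟨t, ht⟩ | ⟨t, ht⟩
      · rw [if_pos ⟨t, by omega⟩, show (m + 1) / 2 = t by omega,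
          show k + 1 = 4 * t by omega, h2, add_zero]
        exact CharTwo.add_self_eq_zero _
      · rw [if_neg (by omega), show k + 1 = 4 * t + 2 by omega, h3]
        simp
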